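/- Let G be a connected weighted undirected graph with incidence matrix B and positive weight matrix 𝒜. Let z ∈ ℂ^n with ‖Bᵀz‖_∞ ≤ γ < π/2. Then the matrix L_{sinc(Bᵀz)} := B𝒜[sinc(Bᵀz)]Bᵀ has rank n−1, where sinc(w) = sin(w)/w (with sinc(0)=1) applied entrywise. -/

import Mathlib

open Matrix

/-- The complex sinc function: `sinc z = sin z / z` for `z ≠ 0` and `sinc 0 = 1`. -/
noncomputable def csinc (z : ℂ) : ℂ := if z = 0 then 1 else Complex.sin z / z

private lemma sin_re' (z : ℂ) : (Complex.sin z).re = Real.sin z.re * Real.cosh z.im := by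
  rw [Complex.sin_eq]
  simp [Complex.sin_ofReal_re, Complex.sin_ofReal_im, Complex.cos_ofReal_re,
    Complex.cos_ofReal_im, Complex.sinh_ofReal_re, Complex.sinh_ofReal_im,
    Complex.cosh_ofReal_re, Complex.cosh_ofReal_im]

private lemma sin_im' (z : ℂ) : (Complex.sin z).im = Real.cos z.re * Real.sinh z.im := by
  rw [Complex.sin_eq]
  simp [Complex.sin_ofReal_re, Complex.sin_ofReal_im, Complex.cos_ofReal_re,
    Complex.cos_ofReal_im, Complex.sinh_ofReal_re, Complex.sinh_ofReal_im,
    Complex.cosh_ofReal_re, Complex.cosh_ofReal_im]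

private lemma sin_mul_self_nonneg {x : ℝ} (hx : |x| < Real.pi) : 0 ≤ Real.sin x * x := by
  rcases le_or_gt 0 x with h | h
  · exact mul_nonneg (Real.sin_nonneg_of_nonneg_of_le_pi h
      (le_of_lt (lt_of_le_of_lt (le_abs_self x) hx))) h
  · have h1 : Real.sin x ≤ 0 := by
      have : 0 ≤ Real.sin (-x) :=
        Real.sin_nonneg_of_nonneg_of_le_pi (by linarith) (by rw [abs_of_neg h] at hx; linarith)
      rw [Real.sin_neg] at this; linarith
    nlinarith

private lemma sin_mul_self_pos {x : ℝ} (hx : |x| < Real.pi) (hx0 : x ≠ 0) :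
    0 < Real.sin x * x := by
  rcases lt_or_gt_of_ne hx0 with h | h
  · have h1 : Real.sin x < 0 := by
      have : 0 < Real.sin (-x) :=
        Real.sin_pos_of_pos_of_lt_pi (by linarith) (by rw [abs_of_neg h] at hx; linarith)
      rw [Real.sin_neg] at this; linarith
    exact mul_pos_of_neg_of_neg h1 h
  · exact mul_pos (Real.sin_pos_of_pos_of_lt_pi h (lt_of_le_of_lt (le_abs_self x) hx)) h

private lemma sinh_mul_self_nonneg (y : ℝ) : 0 ≤ Real.sinh y * y := by
  rcases lt_trichotomy y 0 with h | h | h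
  · have h1 : Real.sinh y < 0 := by
      rw [← Real.sinh_zero]; exact Real.sinh_lt_sinh.2 h
    nlinarith
  · simp [h]
  · have h1 : 0 < Real.sinh y := by
      rw [← Real.sinh_zero]; exact Real.sinh_lt_sinh.2 h
    nlinarith

private lemma sinh_mul_self_pos {y : ℝ} (hy : y ≠ 0) : 0 < Real.sinh y * y := by
  rcases lt_or_gt_of_ne hy with h | h
  · have h1 : Real.sinh y < 0 := by
      rw [← Real.sinh_zero]; exact Real.sinh_lt_sinh.2 h
    exact mul_pos_of_neg_of_neg h1 h
  · have h1 : 0 < Real.sinh y := by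
      rw [← Real.sinh_zero]; exact Real.sinh_lt_sinh.2 h
    exact mul_pos h1 h

private lemma re_csinc_pos {w : ℂ} (hw : ‖w‖ < Real.pi / 2) : 0 < (csinc w).re := by
  by_cases h0 : w = 0
  · simp [csinc, h0]
  · rw [csinc, if_neg h0, Complex.div_re, sin_re', sin_im']
    have hpi : 0 < Real.pi := Real.pi_pos
    have hx : |w.re| < Real.pi / 2 := lt_of_le_of_lt (Complex.abs_re_le_norm w) hw
    have hx' : |w.re| < Real.pi := lt_trans hx (by linarith)
    have hns : 0 < Complex.normSq w := Complex.normSq_pos.2 h0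
    have hcos : 0 < Real.cos w.re := by
      rcases abs_lt.1 hx with ⟨h1, h2⟩
      exact Real.cos_pos_of_mem_Ioo ⟨h1, h2⟩
    have hcosh : 0 < Real.cosh w.im := Real.cosh_pos w.im
    have hA : 0 ≤ Real.sin w.re * Real.cosh w.im * w.re := by
      have := sin_mul_self_nonneg hx'
      nlinarith
    have hBb : 0 ≤ Real.cos w.re * Real.sinh w.im * w.im := by
      have := sinh_mul_self_nonneg w.im
      nlinarith
    have hsum : 0 < Real.sin w.re * Real.cosh w.im * w.re +
        Real.cos w.re * Real.sinh w.im * w.im := by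
      by_cases hxe : w.re = 0
      · have hye : w.im ≠ 0 := fun hye => h0 (Complex.ext hxe hye)
        have := sinh_mul_self_pos hye
        nlinarith
      · have := sin_mul_self_pos hx' hxe
        nlinarith
    rw [← add_div]
    exact div_pos hsum hns

private lemma re_ofReal_mul' (r : ℝ) (z : ℂ) : ((r : ℂ) * z).re = r * z.re := by
  simp [Complex.mul_re]

private lemma im_ofReal_mul' (r : ℝ) (z : ℂ) : ((r : ℂ) * z).im = r * z.im := by
  simp [Complex.mul_im]

private lemma re_mul_ofReal' (z : ℂ) (r : ℝ) : (z * (r : ℂ)).re = z.re * r := by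
  simp [Complex.mul_re]

theorem rank_complex_sinc_laplacian
    (n m : ℕ) (B : Matrix (Fin n) (Fin m) ℝ) (a : Fin m → ℝ)
    (ha : ∀ e, 0 < a e)
    (hB : ∀ e : Fin m, ∃ i j : Fin n, i ≠ j ∧ B i e = 1 ∧ B j e = -1 ∧
      ∀ k, k ≠ i → k ≠ j → B k e = 0)
    (hconn : ∀ v : Fin n → ℝ, B.transpose.mulVec v = 0 → ∃ c, ∀ i, v i = c)
    (γ : ℝ) (hγ : γ < Real.pi / 2)
    (z : Fin n → ℂ)
    (hz : ∀ e, ‖(B.map (Complex.ofReal)).transpose.mulVec z e‖ ≤ γ) :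
    ((B.map (Complex.ofReal)) * Matrix.diagonal (fun e => (a e : ℂ)) *
      Matrix.diagonal (fun e => csinc ((B.map (Complex.ofReal)).transpose.mulVec z e)) *
      (B.map (Complex.ofReal)).transpose).rank = n - 1 := by
  classical
  rcases Nat.eq_zero_or_pos n with hn | hn
  · subst hn
    have h1 := Matrix.rank_le_card_height ((B.map (Complex.ofReal)) *
      Matrix.diagonal (fun e => (a e : ℂ)) *
      Matrix.diagonal (fun e => csinc ((B.map (Complex.ofReal)).transpose.mulVec z e)) *
      (B.map (Complex.ofReal)).transpose)
    have h2 : Fintype.card (Fin 0) = 0 := by simp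
    rw [h2] at h1
    omega
  set Bc : Matrix (Fin n) (Fin m) ℂ := B.map Complex.ofReal with hBcdef
  set w : Fin m → ℂ := Bcᵀ.mulVec z with hwdef
  set d : Fin m → ℂ := fun e => (a e : ℂ) * csinc (w e) with hddef
  have hdre : ∀ e, 0 < (d e).re := by
    intro e
    have h1 : ‖w e‖ < Real.pi / 2 := lt_of_le_of_lt (hz e) hγ
    have h2 := re_csinc_pos h1
    show 0 < ((a e : ℂ) * csinc (w e)).re
    rw [re_ofReal_mul']
    exact mul_pos (ha e) h2
  set L : Matrix (Fin n) (Fin n) ℂ :=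
    Bc * Matrix.diagonal (fun e => (a e : ℂ)) *
      Matrix.diagonal (fun e => csinc (w e)) * Bcᵀ with hLdef
  have hL : L = Bc * Matrix.diagonal d * Bcᵀ := by
    rw [hLdef, Matrix.mul_assoc Bc (Matrix.diagonal _) (Matrix.diagonal _),
      Matrix.diagonal_mul_diagonal]
  have hstar : ∀ x : Fin n → ℂ, Bcᵀ.mulVec (star x) = star (Bcᵀ.mulVec x) := by
    intro x
    funext e
    simp only [Matrix.mulVec, dotProduct, Matrix.transpose_apply, hBcdef,
      Matrix.map_apply, Pi.star_apply, Complex.star_def, map_sum, _root_.map_mul,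
      Complex.conj_ofReal]
  have hker : LinearMap.ker L.mulVecLin = LinearMap.ker (Bcᵀ).mulVecLin := by
    apply le_antisymm
    · intro x hx
      rw [LinearMap.mem_ker, Matrix.mulVecLin_apply] at hx ⊢
      set y : Fin m → ℂ := Bcᵀ.mulVec x with hydef
      have hquad : star x ⬝ᵥ L.mulVec x = ∑ e, d e * ((Complex.normSq (y e) : ℝ) : ℂ) := by
        rw [hL, ← Matrix.mulVec_mulVec, ← Matrix.mulVec_mulVec, Matrix.dotProduct_mulVec,
          ← Matrix.mulVec_transpose, hstar]
        simp only [dotProduct, Matrix.mulVec_diagonal, Pi.star_apply]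
        refine Finset.sum_congr rfl fun e _ => ?_
        calc star (y e) * (d e * y e) = d e * (y e * (starRingEnd ℂ) (y e)) := by
              rw [Complex.star_def]; ring
          _ = d e * ((Complex.normSq (y e) : ℝ) : ℂ) := by rw [Complex.mul_conj]
      have hzero : (0 : ℝ) = ∑ e, (d e).re * Complex.normSq (y e) := by
        have h0 : star x ⬝ᵥ L.mulVec x = 0 := by rw [hx, dotProduct_zero]
        have h1 := congrArg Complex.re (h0.symm.trans hquad)
        rw [Complex.zero_re, Complex.re_sum] at h1
        convert h1 using 2 with e
        rw [re_mul_ofReal']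
      have hy0 : ∀ e, (d e).re * Complex.normSq (y e) = 0 := by
        have := (Finset.sum_eq_zero_iff_of_nonneg (fun e _ =>
          mul_nonneg (hdre e).le (Complex.normSq_nonneg (y e)))).1 hzero.symm
        exact fun e => this e (Finset.mem_univ e)
      funext e
      have h2 : Complex.normSq (y e) = 0 := by
        have := hy0 e
        have hd := hdre e
        nlinarith
      have h3 : y e = 0 := Complex.normSq_eq_zero.1 h2
      simpa using h3
    · intro x hx
      rw [LinearMap.mem_ker, Matrix.mulVecLin_apply] at hx ⊢
      rw [hL, ← Matrix.mulVec_mulVec, hx, Matrix.mulVec_zero]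
  have hones : (Bcᵀ).mulVec (fun _ => (1 : ℂ)) = 0 := by
    funext e
    obtain ⟨i, j, hij, hBi, hBj, hother⟩ := hB e
    have hsub : ∑ k : Fin n, (B k e : ℂ) = ∑ k ∈ ({i, j} : Finset (Fin n)), (B k e : ℂ) := by
      refine (Finset.sum_subset (Finset.subset_univ _) ?_).symm
      intro k _ hk
      simp only [Finset.mem_insert, Finset.mem_singleton, not_or] at hk
      rw [hother k hk.1 hk.2]; simp
    simp only [Matrix.mulVec, dotProduct, Matrix.transpose_apply, hBcdef,
      Matrix.map_apply, mul_one, Pi.zero_apply]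
    rw [hsub, Finset.sum_pair hij, hBi, hBj]
    simp
  have hker2 : LinearMap.ker (Bcᵀ).mulVecLin
      = Submodule.span ℂ {(fun _ => 1 : Fin n → ℂ)} := by
    apply le_antisymm
    · intro v hv
      rw [LinearMap.mem_ker, Matrix.mulVecLin_apply] at hv
      have hre : B.transpose.mulVec (fun i => (v i).re) = 0 := by
        funext e
        have h1 := congrArg (fun q => (q e).re) hv
        simp only [Matrix.mulVec, dotProduct, Matrix.transpose_apply, hBcdef,
          Matrix.map_apply, Complex.re_sum, re_ofReal_mul', Pi.zero_apply,
          Complex.zero_re] at h1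
        simpa [Matrix.mulVec, dotProduct, Matrix.transpose_apply] using h1
      have him : B.transpose.mulVec (fun i => (v i).im) = 0 := by
        funext e
        have h1 := congrArg (fun q => (q e).im) hv
        simp only [Matrix.mulVec, dotProduct, Matrix.transpose_apply, hBcdef,
          Matrix.map_apply, Complex.im_sum, im_ofReal_mul', Pi.zero_apply,
          Complex.zero_im] at h1
        simpa [Matrix.mulVec, dotProduct, Matrix.transpose_apply] using h1
      obtain ⟨c₁, hc₁⟩ := hconn _ hre
      obtain ⟨c₂, hc₂⟩ := hconn _ him
      refine Submodule.mem_span_singleton.2 ⟨Complex.mk c₁ c₂, ?_⟩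
      funext i
      simp only [Pi.smul_apply, smul_eq_mul, mul_one]
      exact (Complex.ext (hc₁ i) (hc₂ i)).symm
    · rw [Submodule.span_le, Set.singleton_subset_iff]
      simp only [SetLike.mem_coe, LinearMap.mem_ker, Matrix.mulVecLin_apply]
      exact hones
  have hone_ne : (fun _ => 1 : Fin n → ℂ) ≠ 0 := by
    intro h
    have := congrFun h ⟨0, hn⟩
    simp at this
  have hfr : Module.finrank ℂ (LinearMap.ker L.mulVecLin) = 1 := by
    rw [hker, hker2]
    exact finrank_span_singleton hone_ne
  have hrn : L.rank + Module.finrank ℂ (LinearMap.ker L.mulVecLin) = n := by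
    rw [Matrix.rank, LinearMap.finrank_range_add_finrank_ker L.mulVecLin]
    simp
  rw [hfr] at hrn
  omega
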